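/- Tadmor's two-point entropy conservative flux: for a scalar conservation law with flux g (expressed in the entropy variable v) and entropy flux G with G'(v) = v g'(v), the numerical flux g*(v₀,v₁) := ∫₀¹ g(v₀+s(v₁-v₀)) ds satisfies the discrete entropy identity (v₁ - v₀)·g*(v₀,v₁) = ψ(v₁) - ψ(v₀), where ψ(v) := v g(v) - G(v). -/

import Mathlib

/-- Tadmor's two-point entropy conservative flux (scalar case):
with `G'(v) = v g'(v)` and `ψ(v) = v g(v) - G(v)`, the numerical flux
`g*(v₀,v₁) = ∫₀¹ g(v₀ + s(v₁-v₀)) ds` satisfies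
`(v₁ - v₀) g*(v₀,v₁) = ψ(v₁) - ψ(v₀)`. -/
theorem stmt19 (g : ℝ → ℝ) (hg : ContDiff ℝ 1 g)
    (G : ℝ → ℝ) (hG : ∀ v : ℝ, G v = ∫ s in (0:ℝ)..v, s * deriv g s)
    (ψ : ℝ → ℝ) (hψ : ∀ v : ℝ, ψ v = v * g v - G v)
    (gstar : ℝ → ℝ → ℝ)
    (hgstar : ∀ v₀ v₁ : ℝ,
      gstar v₀ v₁ = ∫ s in (0:ℝ)..1, g (v₀ + s * (v₁ - v₀))) :
    ∀ v₀ v₁ : ℝ, (v₁ - v₀) * gstar v₀ v₁ = ψ v₁ - ψ v₀ := by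
  intro v₀ v₁
  have hgc : Continuous g := hg.continuous
  have hdc : Continuous (deriv g) := (hg.iterate_deriv' 0 1).continuous
  have hic : Continuous (fun s : ℝ => s * deriv g s) := continuous_id.mul hdc
  -- ψ has derivative g
  have hψd : ∀ x : ℝ, HasDerivAt ψ (g x) x := by
    intro x
    have hGd : HasDerivAt G (x * deriv g x) x := by
      have : HasDerivAt (fun v => ∫ s in (0:ℝ)..v, s * deriv g s) (x * deriv g x) x :=
        intervalIntegral.integral_hasDerivAt_right
          (hic.intervalIntegrable _ _)
          hic.aestronglyMeasurable.stronglyMeasurableAtFilter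
          hic.continuousAt
      exact this.congr_of_eventuallyEq (by filter_upwards with v using hG v)
    have hvg : HasDerivAt (fun v => v * g v)
        (1 * g x + x * deriv g x) x :=
      (hasDerivAt_id x).mul ((hg.differentiable one_ne_zero x).hasDerivAt)
    have := hvg.sub hGd
    have h2 : (1 * g x + x * deriv g x) - x * deriv g x = g x := by ring
    rw [h2] at this
    exact this.congr_of_eventuallyEq (by filter_upwards with v using hψ v)
  -- FTC
  have hftc : (∫ x in v₀..v₁, g x) = ψ v₁ - ψ v₀ :=
    intervalIntegral.integral_eq_sub_of_hasDerivAt (fun x _ => hψd x)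
      (hgc.intervalIntegrable _ _)
  rw [hgstar]
  have := intervalIntegral.mul_integral_comp_mul_add (a := (0:ℝ)) (b := 1)
    (f := g) (v₁ - v₀) v₀
  simp only [mul_zero, zero_add, mul_one] at this
  calc (v₁ - v₀) * ∫ s in (0:ℝ)..1, g (v₀ + s * (v₁ - v₀))
      = (v₁ - v₀) * ∫ s in (0:ℝ)..1, g ((v₁ - v₀) * s + v₀) := by
        congr 1; apply intervalIntegral.integral_congr
        intro s _; ring_nf
    _ = ∫ x in v₀..(v₁ - v₀ + v₀), g x := this
    _ = ψ v₁ - ψ v₀ := by rw [show v₁ - v₀ + v₀ = v₁ by ring]; exact hftc
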